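/- Let M, a, s be positive integers with M > 1 such that ∑_{i=0}^{M-1} (a+i)^2 = s^2. If M = 24·m₁ + 16 for a nonnegative integer m₁, then for every integer i ≥ 2 one has m₁ ≢ 2·(2^(2i-4) − 1)/3 (mod 2^(2i-2)). (For i ≥ 2, 2^(2i-4) − 1 is divisible by 3, so this residue is an integer.) -/

import Mathlib

lemma sum_sq_int (a : ℕ) : ∀ n : ℕ,
    6 * ∑ i ∈ Finset.range n, ((a : ℤ) + i) ^ 2 =
      6 * n * a ^ 2 + 6 * a * n * (n - 1) + n * (n - 1) * (2 * n - 1) := by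
  intro n
  induction n with
  | zero => simp
  | succ n ih =>
    rw [Finset.sum_range_succ, mul_add, ih]
    push_cast
    ring

theorem stmt (M a s m₁ : ℕ) (hM : 1 < M) (ha : 1 ≤ a) (hs : 1 ≤ s)
    (hsum : ∑ i ∈ Finset.range M, (a + i) ^ 2 = s ^ 2)
    (hMeq : M = 24 * m₁ + 16) :
    ∀ i : ℕ, 2 ≤ i → ¬ m₁ ≡ 2 * (2 ^ (2 * i - 4) - 1) / 3 [MOD 2 ^ (2 * i - 2)] := by
  intro i hi h
  -- basic exponent arithmetic
  set j := i - 2 with hj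
  have hji : i = j + 2 := by omega
  -- 3 ∣ 2^(2i-4) - 1
  have h4 : (2:ℕ) ^ (2 * i - 4) = 4 ^ j := by
    have : 2 * i - 4 = 2 * j := by omega
    rw [this, pow_mul]; norm_num
  have hdvd3 : 3 ∣ 4 ^ j - 1 := by
    have hmod : 4 ^ j ≡ 1 ^ j [MOD 3] := Nat.ModEq.pow j (by decide)
    have hmod' : 4 ^ j ≡ 1 [MOD 3] := by simpa using hmod
    simpa using (Nat.modEq_iff_dvd' (Nat.one_le_pow _ _ (by norm_num))).mp hmod'.symm
  obtain ⟨c, hc⟩ := hdvd3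
  have hr : 2 * (2 ^ (2 * i - 4) - 1) / 3 = 2 * c := by
    rw [h4, hc]
    omega
  rw [hr] at h
  -- M ≡ 2^(2i) [MOD 24 * 2^(2i-2)]
  have h1 : 24 * m₁ + 16 ≡ 24 * (2 * c) + 16 [MOD 24 * 2 ^ (2 * i - 2)] :=
    (Nat.ModEq.mul_left' 24 h).add_right 16
  have h2 : 24 * (2 * c) + 16 = 2 ^ (2 * i) := by
    have e1 : 2 ^ (2 * i) = 16 * 4 ^ j := by
      have e2 : 2 * i = 2 * j + 4 := by omega
      rw [e2, pow_add, pow_mul]; norm_num [mul_comm]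
    have e3 : 1 ≤ 4 ^ j := Nat.one_le_pow _ _ (by norm_num)
    omega
  have h3 : M ≡ 2 ^ (2 * i) [MOD 2 ^ (2 * i + 1)] := by
    rw [hMeq]
    refine Nat.ModEq.of_dvd ?_ (h2 ▸ h1)
    refine ⟨3, ?_⟩
    have : 2 * i + 1 = 3 + (2 * i - 2) := by omega
    rw [this, pow_add]; ring
  -- extract M = 2^(2i) * u with u odd
  have hlt : 2 ^ (2 * i) < 2 ^ (2 * i + 1) := Nat.pow_lt_pow_right (by norm_num) (by omega)
  have hMmod : M % 2 ^ (2 * i + 1) = 2 ^ (2 * i) := by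
    have := h3
    unfold Nat.ModEq at this
    rw [this, Nat.mod_eq_of_lt hlt]
  set u : ℕ := 2 * (M / 2 ^ (2 * i + 1)) + 1 with hu
  have hMu : M = 2 ^ (2 * i) * u := by
    have hdm := Nat.div_add_mod M (2 ^ (2 * i + 1))
    rw [hMmod] at hdm
    have h21 : (2:ℕ) ^ (2 * i + 1) = 2 ^ (2 * i) * 2 := by rw [pow_succ]
    calc M = 2 ^ (2 * i + 1) * (M / 2 ^ (2 * i + 1)) + 2 ^ (2 * i) := hdm.symm
      _ = 2 ^ (2 * i) * u := by rw [h21, hu]; ring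
  have hu_odd : Odd u := ⟨M / 2 ^ (2 * i + 1), by omega⟩
  -- the sum identity, in ℕ
  set X : ℕ := 6 * a ^ 2 + 6 * a * (M - 1) + (M - 1) * (2 * M - 1) with hX
  have key : 6 * s ^ 2 = M * X := by
    have hz := congrArg (fun n : ℕ => (n : ℤ)) hsum
    push_cast at hz
    have := sum_sq_int a M
    rw [hz] at this
    have hM1 : (1:ℤ) ≤ (M:ℤ) := by exact_mod_cast hM.le
    have : (6 * s ^ 2 : ℤ) = (M : ℤ) * (X : ℤ) := by
      rw [this, hX]
      push_cast [Nat.cast_sub (by omega : 1 ≤ M), Nat.cast_sub (by omega : 1 ≤ 2 * M)]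
      ring
    exact_mod_cast this
  -- X is odd
  have hMeven : Even M := by rw [hMeq]; exact ⟨12 * m₁ + 8, by ring⟩
  have hX_odd : Odd X := by
    have h1 : Odd ((M - 1) * (2 * M - 1)) := by
      refine Odd.mul ?_ ?_ <;> rw [Nat.odd_iff] <;> omega
    have h2 : Even (6 * a ^ 2 + 6 * a * (M - 1)) := ⟨3 * a ^ 2 + 3 * a * (M - 1), by ring⟩
    exact h2.add_odd h1
  -- 3 * s^2 = 2^(2i-1) * (u * X)
  have hkey2 : 3 * s ^ 2 = 2 ^ (2 * i - 1) * (u * X) := by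
    have e : 2 * (3 * s ^ 2) = 2 * (2 ^ (2 * i - 1) * (u * X)) := by
      have h2i : 2 * 2 ^ (2 * i - 1) = 2 ^ (2 * i) := by
        rw [← pow_succ']
        congr 1
        omega
      calc 2 * (3 * s ^ 2) = 6 * s ^ 2 := by ring
        _ = M * X := key
        _ = 2 ^ (2 * i) * u * X := by rw [hMu]
        _ = 2 * (2 ^ (2 * i - 1) * (u * X)) := by rw [← h2i]; ring
    exact Nat.eq_of_mul_eq_mul_left (by norm_num) e
  -- factorization at 2
  have hs0 : s ≠ 0 := by omega
  have hu0 : u ≠ 0 := by omega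
  have hX0 : X ≠ 0 := hX_odd.pos.ne'
  have hfL : (3 * s ^ 2).factorization 2 = 2 * s.factorization 2 := by
    rw [Nat.factorization_mul (by norm_num) (pow_ne_zero _ hs0), Nat.factorization_pow]
    simp [Nat.factorization_eq_zero_of_not_dvd (by norm_num : ¬ 2 ∣ 3)]
  have hfR : (2 ^ (2 * i - 1) * (u * X)).factorization 2 = 2 * i - 1 := by
    rw [Nat.factorization_mul (pow_ne_zero _ (by norm_num)) (mul_ne_zero hu0 hX0),
      Nat.factorization_mul hu0 hX0, Nat.factorization_pow]
    have hu2 : u.factorization 2 = 0 :=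
      Nat.factorization_eq_zero_of_not_dvd (by rw [Nat.odd_iff] at hu_odd; omega)
    have hX2 : X.factorization 2 = 0 :=
      Nat.factorization_eq_zero_of_not_dvd (by rw [Nat.odd_iff] at hX_odd; omega)
    simp [hu2, hX2, Nat.Prime.factorization (by norm_num : Nat.Prime 2)]
  have : 2 * s.factorization 2 = 2 * i - 1 := by rw [← hfL, hkey2, hfR]
  omega
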